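/- arXiv:1811.05932 — 3 statements merged into one kernel-verified Lean document; each statement's English description precedes it below -/
import Mathlib

section
/- Let f, g : Fin n → ℝ and suppose ∑_{i} f i = n * c and ∑_{i} g i = n * d, where c, d : ℝ, and let α = 1 - √(1 - 1/n) with n ≥ 1. Then ∑_{i} (f i - α*c)*(g i - α*d) + c*d = ∑_{i} (f i)*(g i). -/
theorem stmt2 (n : ℕ) (hn : 1 ≤ n) (f g : Fin n → ℝ) (c d : ℝ)
    (hf : ∑ i, f i = n * c) (hg : ∑ i, g i = n * d) :
    let α : ℝ := 1 - Real.sqrt (1 - 1 / n)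
    ∑ i, (f i - α * c) * (g i - α * d) + c * d = ∑ i, f i * g i := by
  intro α
  have hn' : (1:ℝ) ≤ (n:ℝ) := by exact_mod_cast hn
  have hnpos : (0:ℝ) < n := lt_of_lt_of_le one_pos hn'
  have h0 : (0:ℝ) ≤ 1 - 1 / n := by
    have : 1 / (n:ℝ) ≤ 1 := by rw [div_le_one hnpos]; exact hn'
    linarith
  have hsq : (α - 1)^2 = 1 - 1 / n := by
    have h1 : α - 1 = -Real.sqrt (1 - 1/n) := by simp only [α]; ring
    rw [h1, neg_pow, Real.sq_sqrt h0]; ring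
  have key : (n:ℝ) * α^2 - 2 * n * α = -1 := by
    have h2 : (n:ℝ) * α^2 - 2 * n * α = n * ((α-1)^2) - n := by ring
    rw [h2, hsq]; field_simp; ring
  have expand : ∑ i, (f i - α * c) * (g i - α * d)
      = ∑ i, (f i * g i - α * d * f i - α * c * g i + α * c * (α * d)) :=
    Finset.sum_congr rfl (fun i _ => by ring)
  rw [expand]
  simp only [Finset.sum_add_distrib, Finset.sum_sub_distrib, ← Finset.mul_sum,
    Finset.sum_const, Finset.card_univ, Fintype.card_fin, nsmul_eq_mul, hf, hg]
  linear_combination (c*d) * key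
end

section
/- Let F : Fin n → Fin k → ℝ be such that the columns are orthonormal, i.e., ∑_i F i j * F i l = δ_{jl} for all j, l. Define the mean vector m j = (∑_i F i j)/n, let α = 1 - √(1 - 1/n) with n ≥ 1, and define F' : Fin (n+1) → Fin k → ℝ by F' i j = F i j - α * m j for i < n, and F' n j = m j. Then the columns of F' are orthonormal: ∑_i F' i j * F' i l = δ_{jl} for all j, l. -/
theorem stmt3 (n k : ℕ) (hn : 1 ≤ n) (F : Fin n → Fin k → ℝ)
    (horth : ∀ j l, ∑ i, F i j * F i l = if j = l then (1 : ℝ) else 0)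
    (m : Fin k → ℝ) (hm : ∀ j, m j = (∑ i, F i j) / n)
    (α : ℝ) (hα : α = 1 - Real.sqrt (1 - 1 / n))
    (F' : Fin (n + 1) → Fin k → ℝ)
    (hF'cast : ∀ (i : Fin n) (j : Fin k), F' i.castSucc j = F i j - α * m j)
    (hF'last : ∀ j, F' (Fin.last n) j = m j) :
    ∀ j l, ∑ i, F' i j * F' i l = if j = l then (1 : ℝ) else 0 := by
  intro j l
  have hn0 : (n : ℝ) ≠ 0 := by positivity
  have h1 : (0:ℝ) ≤ 1 - 1 / n := by
    have : (1:ℝ) ≤ n := by exact_mod_cast hn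
    have : 1 / (n:ℝ) ≤ 1 := by
      rw [div_le_one (by positivity)]; exact this
    linarith
  have hsq : (1 - α)^2 = 1 - 1/n := by
    rw [hα, show (1:ℝ) - (1 - Real.sqrt (1 - 1/n)) = Real.sqrt (1 - 1/n) by ring, Real.sq_sqrt h1]
  have hkey : (n:ℝ) * α^2 - 2*n*α + 1 = 0 := by
    have h2 : (n:ℝ) * ((1-α)^2) = n * (1 - 1/n) := by rw [hsq]
    field_simp at h2
    nlinarith [h2]
  have hsum : ∀ j, ∑ i, F i j = n * m j := by
    intro j; rw [hm]; field_simp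
  have expand : ∀ i : Fin n, (F i j - α * m j) * (F i l - α * m l)
      = F i j * F i l - (α * m l) * F i j - (α * m j) * F i l + α^2 * m j * m l := by
    intro i; ring
  rw [Fin.sum_univ_castSucc]
  simp only [hF'cast, hF'last]
  rw [Finset.sum_congr rfl (fun i _ => expand i)]
  rw [Finset.sum_add_distrib, Finset.sum_sub_distrib, Finset.sum_sub_distrib,
    ← Finset.mul_sum, ← Finset.mul_sum, horth, hsum, hsum,
    Finset.sum_const, Finset.card_univ, Fintype.card_fin, nsmul_eq_mul]
  linear_combination (m j * m l) * hkey
end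

section
/- Let F : Fin n → Fin k → ℝ have orthonormal columns, let S ⊆ Fin n be a nonempty subset with |S| = s, define m j = (∑_{i ∈ S} F i j)/s, α = 1 - √(1 - 1/s), and define F' : Fin (n+1) → Fin k → ℝ by F' i j = F i j - α * m j for i ∈ S, F' i j = F i j for i ∈ Fin n \ S, and F' n j = m j. Then F' has orthonormal columns. -/
theorem stmt4 (n k : ℕ) (F : Fin n → Fin k → ℝ)
    (horth : ∀ j l, ∑ i, F i j * F i l = if j = l then (1 : ℝ) else 0)
    (S : Finset (Fin n)) (hS : S.Nonempty) (s : ℕ) (hs : S.card = s)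
    (m : Fin k → ℝ) (hm : ∀ j, m j = (∑ i ∈ S, F i j) / s)
    (α : ℝ) (hα : α = 1 - Real.sqrt (1 - 1 / s))
    (F' : Fin (n + 1) → Fin k → ℝ)
    (hF'in : ∀ i ∈ S, ∀ j, F' i.castSucc j = F i j - α * m j)
    (hF'out : ∀ i ∉ S, ∀ j, F' (Fin.castSucc i) j = F i j)
    (hF'last : ∀ j, F' (Fin.last n) j = m j) :
    ∀ j l, ∑ i, F' i j * F' i l = if j = l then (1 : ℝ) else 0 := by
  intro j l
  have hcard : 0 < s := hs ▸ Finset.card_pos.mpr hS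
  have hs0 : (s : ℝ) ≠ 0 := by exact_mod_cast hcard.ne'
  have h1s : (1 : ℝ) ≤ s := by exact_mod_cast hcard
  have hnn : (0:ℝ) ≤ 1 - 1/s := by
    have : 1/(s:ℝ) ≤ 1 := by
      rw [div_le_one (by linarith)]; linarith
    linarith
  have hkey : (s:ℝ) * (α^2 - 2*α) = -1 := by
    have hsq : Real.sqrt (1 - 1/s) ^ 2 = 1 - 1/s := Real.sq_sqrt hnn
    have : α^2 - 2*α = -(1/s) := by nlinarith [hsq]
    rw [this]; field_simp
  have hsumS : ∀ j, ∑ i ∈ S, F i j = s * m j := by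
    intro j; rw [hm j]; field_simp
  have hsplit : ∑ i : Fin (n+1), F' i j * F' i l
      = (∑ i ∈ S, (F i j - α*m j) * (F i l - α*m l))
        + (∑ i ∈ Sᶜ, F i j * F i l) + m j * m l := by
    rw [Fin.sum_univ_castSucc]
    congr 1
    · rw [← Finset.sum_add_sum_compl S (fun i => F' i.castSucc j * F' i.castSucc l)]
      congr 1
      · exact Finset.sum_congr rfl fun i hi => by rw [hF'in i hi j, hF'in i hi l]
      · exact Finset.sum_congr rfl fun i hi => by
          rw [hF'out i (Finset.mem_compl.mp hi) j, hF'out i (Finset.mem_compl.mp hi) l]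
    · rw [hF'last j, hF'last l]
  have hcompl : ∑ i ∈ Sᶜ, F i j * F i l
      = (if j = l then (1:ℝ) else 0) - ∑ i ∈ S, F i j * F i l := by
    have h := Finset.sum_add_sum_compl S (fun i => F i j * F i l)
    rw [horth j l] at h
    linarith
  have hexp : ∑ i ∈ S, (F i j - α*m j) * (F i l - α*m l)
      = ∑ i ∈ S, F i j * F i l - α*m l*(∑ i ∈ S, F i j) - α*m j*(∑ i ∈ S, F i l)
        + (S.card : ℝ) * (α*m j*(α*m l)) := by
    rw [Finset.sum_congr rfl (fun i _ => show (F i j - α*m j) * (F i l - α*m l)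
      = F i j * F i l - α*m l*F i j - α*m j*F i l + α*m j*(α*m l) by ring)]
    rw [Finset.sum_add_distrib, Finset.sum_sub_distrib, Finset.sum_sub_distrib,
      ← Finset.mul_sum, ← Finset.mul_sum, Finset.sum_const, nsmul_eq_mul]
  rw [hsplit, hexp, hcompl, hsumS j, hsumS l, hs]
  linear_combination (m j * m l) * hkey
end
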